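/- Every square-free word satisfying the separation property (every factor XYX with X nonempty has |Y| > |X|) is steady, i.e., deleting any single letter from it yields a square-free word. -/

import Mathlib

/-- A word is square-free if it contains no nonempty factor of the form `X ++ X`. -/
def SquareFree {α : Type*} (W : List α) : Prop :=
  ∀ X : List α, X ≠ [] → ¬ (X ++ X) <:+: W

/-- A square-free word is steady if deleting any single letter leaves it square-free. -/
def Steady {α : Type*} (W : List α) : Prop :=
  SquareFree W ∧ ∀ i < W.length, SquareFree (W.eraseIdx i)

/-- Every square-free word with the separation property is steady. -/
theorem stmt1 {α : Type*} (W : List α) (hsf : SquareFree W)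
    (hsep : ∀ A X Y B : List α, W = A ++ X ++ Y ++ X ++ B → X ≠ [] → X.length < Y.length) :
    ∀ i < W.length, SquareFree (W.eraseIdx i) := by
  intro i hi X hX hinf
  obtain ⟨A, B, hAB⟩ := hinf
  rw [List.eraseIdx_eq_take_drop_succ] at hAB
  have hXlen : 0 < X.length := List.length_pos_iff.mpr hX
  obtain ⟨c, hc⟩ : ∃ c, c = W[i] := ⟨_, rfl⟩
  have hW0 : W = W.take i ++ c :: W.drop (i + 1) := by
    rw [hc]
    conv_lhs => rw [← List.take_append_drop i W, List.drop_eq_getElem_cons hi]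
  have hlenP : (W.take i).length = i := by simp [Nat.le_of_lt hi]
  obtain ⟨E, hEdef⟩ : ∃ E, E = A ++ (X ++ (X ++ B)) := ⟨_, rfl⟩
  have hE : W.take i ++ W.drop (i + 1) = E := by rw [← hAB]; simp [hEdef]
  have h1 : E.take i = W.take i := by
    rw [← hE, List.take_append, hlenP, Nat.sub_self, List.take_zero,
      List.append_nil, List.take_of_length_le hlenP.le]
  have h2 : E.drop i = W.drop (i + 1) := by
    rw [← hE, List.drop_append, hlenP, Nat.sub_self, List.drop_zero,
      List.drop_of_length_le hlenP.le, List.nil_append]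
  have hW : W = E.take i ++ c :: E.drop i := by rw [h1, h2]; exact hW0
  rcases le_or_gt i A.length with hc1 | hc1
  · -- deletion point is before the square
    apply hsf X hX
    have ht : E.take i = A.take i := by
      rw [hEdef, List.take_append, Nat.sub_eq_zero_of_le hc1, List.take_zero,
        List.append_nil]
    have hd : E.drop i = A.drop i ++ (X ++ (X ++ B)) := by
      rw [hEdef, List.drop_append, Nat.sub_eq_zero_of_le hc1, List.drop_zero]
    exact ⟨A.take i ++ c :: A.drop i, B, by rw [hW, ht, hd]; simp⟩
  rcases le_or_gt (A.length + (X.length + X.length)) i with hc2 | hc2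
  · -- deletion point is after the square
    apply hsf X hX
    have hE2 : E = (A ++ (X ++ X)) ++ B := by simp [hEdef]
    have hij : i = (A ++ (X ++ X)).length + (i - A.length - X.length - X.length) := by
      simp; omega
    have ht : E.take i = (A ++ (X ++ X)) ++ B.take (i - A.length - X.length - X.length) := by
      rw [hE2]; conv_lhs => rw [hij]
      rw [List.take_length_add_append]
    have hd : E.drop i = B.drop (i - A.length - X.length - X.length) := by
      rw [hE2]; conv_lhs => rw [hij]
      rw [List.drop_length_add_append]
    exact ⟨A, B.take (i - A.length - X.length - X.length) ++
      c :: B.drop (i - A.length - X.length - X.length), by rw [hW, ht, hd]; simp⟩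
  rcases le_or_gt i (A.length + X.length) with hc3 | hc3
  · -- deletion point inside the first copy of X
    obtain ⟨X1, hX1⟩ : ∃ Y, Y = X.take (i - A.length) := ⟨_, rfl⟩
    obtain ⟨X2, hX2⟩ : ∃ Y, Y = X.drop (i - A.length) := ⟨_, rfl⟩
    have hsplit : X1 ++ X2 = X := by rw [hX1, hX2]; exact List.take_append_drop _ X
    have hl1 : X1.length = i - A.length := by rw [hX1, List.length_take]; omega
    have hl2 : X2.length = X.length - (i - A.length) := by rw [hX2, List.length_drop]
    have hij : i = A.length + (i - A.length) := by omega
    have ht : E.take i = A ++ X1 := by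
      rw [hEdef]; conv_lhs => rw [hij]
      rw [List.take_length_add_append, List.take_append,
        show i - A.length - X.length = 0 from Nat.sub_eq_zero_of_le (by omega),
        List.take_zero, List.append_nil, ← hX1]
    have hd : E.drop i = X2 ++ (X ++ B) := by
      rw [hEdef]; conv_lhs => rw [hij]
      rw [List.drop_length_add_append, List.drop_append,
        show i - A.length - X.length = 0 from Nat.sub_eq_zero_of_le (by omega),
        List.drop_zero, ← hX2]
    rw [← hsplit] at hd
    have hW2 : W = A ++ X1 ++ (c :: X2) ++ X1 ++ (X2 ++ B) := by rw [hW, ht, hd]; simp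
    have hX1ne : X1 ≠ [] := List.ne_nil_of_length_pos (by omega)
    have g1 := hsep A X1 (c :: X2) (X2 ++ B) hW2 hX1ne
    simp only [List.length_cons] at g1
    by_cases hX2e : X2 = []
    · have e2 : X2.length = 0 := by simp [hX2e]
      omega
    · have g2 := hsep (A ++ X1 ++ [c]) X2 X1 B (by rw [hW2]; simp) hX2e
      omega
  · -- deletion point inside the second copy of X
    obtain ⟨X1, hX1⟩ : ∃ Y, Y = X.take (i - A.length - X.length) := ⟨_, rfl⟩
    obtain ⟨X2, hX2⟩ : ∃ Y, Y = X.drop (i - A.length - X.length) := ⟨_, rfl⟩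
    have hsplit : X1 ++ X2 = X := by rw [hX1, hX2]; exact List.take_append_drop _ X
    have hl1 : X1.length = i - A.length - X.length := by rw [hX1, List.length_take]; omega
    have hl2 : X2.length = X.length - (i - A.length - X.length) := by
      rw [hX2, List.length_drop]
    have hE2 : E = (A ++ X) ++ (X ++ B) := by simp [hEdef]
    have hij : i = (A ++ X).length + (i - A.length - X.length) := by simp; omega
    have ht : E.take i = (A ++ X) ++ X1 := by
      rw [hE2]; conv_lhs => rw [hij]
      rw [List.take_length_add_append, List.take_append,
        show i - A.length - X.length - X.length = 0 from Nat.sub_eq_zero_of_le (by omega),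
        List.take_zero, List.append_nil, ← hX1]
    have hd : E.drop i = X2 ++ B := by
      rw [hE2]; conv_lhs => rw [hij]
      rw [List.drop_length_add_append, List.drop_append,
        show i - A.length - X.length - X.length = 0 from Nat.sub_eq_zero_of_le (by omega),
        List.drop_zero, ← hX2]
    have hW2 : W = A ++ X1 ++ X2 ++ X1 ++ ([c] ++ (X2 ++ B)) := by
      rw [hW, ht, hd, ← hsplit]; simp
    have hX1ne : X1 ≠ [] := List.ne_nil_of_length_pos (by omega)
    have hX2ne : X2 ≠ [] := List.ne_nil_of_length_pos (by omega)
    have g1 := hsep A X1 X2 ([c] ++ (X2 ++ B)) hW2 hX1ne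
    have g2 := hsep (A ++ X1) X2 (X1 ++ [c]) B (by rw [hW2]; simp) hX2ne
    simp only [List.length_append, List.length_singleton] at g2
    omega
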